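/- Let A be an abelian category satisfying AB4 and V a filtered object (an N^op-indexed diagram of monomorphisms F_0 V ← F_1 V ← F_2 V ← ...). Then for each e there is a natural isomorphism between lim_{a≥e} coker(F_a V → F_e V) and F_e V̂ := ker( lim_a coker(F_a V → F_0 V) → coker(F_e V → F_0 V) ). -/

import Mathlib

/-!
STATEMENT 0: Let `A` be an abelian category satisfying AB4 and `V` a filtered object
(an `ℕᵒᵖ`-indexed diagram of monomorphisms `F₀V ← F₁V ← ⋯`). Then for each `e` there is a
natural isomorphism between `lim_{a ≥ e} coker (F_a V → F_e V)` and
`F_e V̂ := ker (lim_a coker (F_a V → F₀ V) → coker (F_e V → F₀ V))`.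
-/

open CategoryTheory CategoryTheory.Limits Opposite

universe v u

variable {A : Type u} [Category.{v} A] [Abelian A]
  [HasCoproducts A] [AB4 A] [HasLimitsOfShape ℕᵒᵖ A]

/-- A filtered object: an `ℕᵒᵖ`-indexed diagram all of whose structure maps are monos. -/
def IsFilteredObj (V : ℕᵒᵖ ⥤ A) : Prop :=
  ∀ {a b : ℕᵒᵖ} (f : a ⟶ b), Mono (V.map f)

/-- The diagram `a ↦ coker (i_a : F_a V ⟶ F_0 V)`. -/
noncomputable def cokerDiagram (V : ℕᵒᵖ ⥤ A) : ℕᵒᵖ ⥤ A where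
  obj a := cokernel (V.map (homOfLE (Nat.zero_le a.unop)).op)
  map {a b} f := cokernel.map _ _ (V.map f) (𝟙 _) (by
    rw [Category.comp_id, ← V.map_comp]
    congr 1)
  map_id := by intro a; ext; simp
  map_comp := by intro a b c f g; ext; simp

/-- The diagram `k ↦ coker (F_{e+k} V ⟶ F_e V)`, indexing the objects
`coker (F_a V → F_e V)` for `a ≥ e`. -/
noncomputable def relCokerDiagram (V : ℕᵒᵖ ⥤ A) (e : ℕ) : ℕᵒᵖ ⥤ A where
  obj k := cokernel (V.map (homOfLE (Nat.le_add_right e k.unop)).op)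
  map {a b} f := cokernel.map _ _
    (V.map (homOfLE (Nat.add_le_add_left (leOfHom f.unop) e)).op) (𝟙 _) (by
      rw [Category.comp_id, ← V.map_comp]
      congr 1)
  map_id := by intro a; ext; simp
  map_comp := by intro a b c f g; ext; simp

section ThirdIso

variable {X Y Z : A} (f f' : X ⟶ Y) (g : Y ⟶ Z) (h : X ⟶ Z)

theorem third_zero (w₁ : f ≫ g = 𝟙 X ≫ h) (w₂ : h ≫ 𝟙 Z = f' ≫ g) :
    cokernel.map f h (𝟙 X) g w₁ ≫ cokernel.map h g f' (𝟙 Z) w₂ = 0 := by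
  ext
  simp

theorem third_mono [Mono g] (w₁ : f ≫ g = 𝟙 X ≫ h) :
    Mono (cokernel.map f h (𝟙 X) g w₁) := by
  obtain rfl : h = f ≫ g := by simpa using w₁.symm
  rw [Preadditive.mono_iff_cancel_zero]
  intro T u hu
  obtain ⟨T', π₁, hπ₁, y, hy⟩ := surjective_up_to_refinements_of_epi (cokernel.π f) u
  have h1 : cokernel.π f ≫ cokernel.map f (f ≫ g) (𝟙 X) g w₁ = g ≫ cokernel.π (f ≫ g) := by
    simp
  have hyg : (y ≫ g) ≫ cokernel.π (f ≫ g) = 0 := by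
    calc (y ≫ g) ≫ cokernel.π (f ≫ g)
        = y ≫ (cokernel.π f ≫ cokernel.map f (f ≫ g) (𝟙 X) g w₁) := by
          rw [h1, Category.assoc]
      _ = (π₁ ≫ u) ≫ cokernel.map f (f ≫ g) (𝟙 X) g w₁ := by
          rw [← Category.assoc, ← hy, Category.assoc]
      _ = 0 := by rw [Category.assoc, hu, comp_zero]
  have hex : (ShortComplex.mk (f ≫ g) (cokernel.π (f ≫ g)) (cokernel.condition _)).Exact :=
    ShortComplex.exact_of_g_is_cokernel _ (cokernelIsCokernel (f ≫ g))
  obtain ⟨T'', π₂, hπ₂, x, hx⟩ := hex.exact_up_to_refinements (y ≫ g) hyg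
  have hx' : (x ≫ f) ≫ g = (π₂ ≫ y) ≫ g := by
    rw [Category.assoc, Category.assoc]
    simpa [ShortComplex.mk] using hx.symm
  have hxy : x ≫ f = π₂ ≫ y := by
    rwa [cancel_mono g] at hx'
  have : (π₂ ≫ π₁) ≫ u = 0 := by
    calc (π₂ ≫ π₁) ≫ u = π₂ ≫ (y ≫ cokernel.π f) := by
          rw [Category.assoc, hy]
      _ = (x ≫ f) ≫ cokernel.π f := by rw [← Category.assoc, ← hxy, Category.assoc]
      _ = 0 := by rw [Category.assoc, cokernel.condition, comp_zero]
  rw [← cancel_epi π₁, ← cancel_epi π₂]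
  simpa using this

theorem third_exact [Mono g] (hf : f = f') (w₁ : f ≫ g = 𝟙 X ≫ h) (w₂ : h ≫ 𝟙 Z = f' ≫ g) :
    (ShortComplex.mk _ _ (third_zero f f' g h w₁ w₂)).Exact := by
  subst hf
  obtain rfl : h = f ≫ g := by simpa using w₁.symm
  rw [ShortComplex.exact_iff_exact_up_to_refinements]
  intro T u hu
  dsimp at u hu ⊢
  obtain ⟨T', π₁, hπ₁, z, hz⟩ := surjective_up_to_refinements_of_epi (cokernel.π (f ≫ g)) u
  have h2 : cokernel.π (f ≫ g) ≫ cokernel.map (f ≫ g) g f (𝟙 Z) w₂ = cokernel.π g := by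
    simp
  have hzg : z ≫ cokernel.π g = 0 := by
    calc z ≫ cokernel.π g
        = z ≫ (cokernel.π (f ≫ g) ≫ cokernel.map (f ≫ g) g f (𝟙 Z) w₂) := by rw [h2]
      _ = (π₁ ≫ u) ≫ cokernel.map (f ≫ g) g f (𝟙 Z) w₂ := by
          rw [← Category.assoc, ← hz, Category.assoc]
      _ = 0 := by rw [Category.assoc, hu, comp_zero]
  have hex : (ShortComplex.mk g (cokernel.π g) (cokernel.condition _)).Exact :=
    ShortComplex.exact_of_g_is_cokernel _ (cokernelIsCokernel g)
  obtain ⟨T'', π₂, hπ₂, y, hy⟩ := hex.exact_up_to_refinements z hzg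
  refine ⟨T'', π₂ ≫ π₁, epi_comp _ _, y ≫ cokernel.π f, ?_⟩
  have h1 : cokernel.π f ≫ cokernel.map f (f ≫ g) (𝟙 X) g w₁ = g ≫ cokernel.π (f ≫ g) := by
    simp
  calc (π₂ ≫ π₁) ≫ u = π₂ ≫ (z ≫ cokernel.π (f ≫ g)) := by rw [Category.assoc, hz]
    _ = (π₂ ≫ z) ≫ cokernel.π (f ≫ g) := by rw [Category.assoc]
    _ = (y ≫ g) ≫ cokernel.π (f ≫ g) := by
        have hy' : π₂ ≫ z = y ≫ g := hy
        rw [hy']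
    _ = y ≫ (cokernel.π f ≫ cokernel.map f (f ≫ g) (𝟙 X) g w₁) := by
        rw [h1, Category.assoc]
    _ = (y ≫ cokernel.π f) ≫ cokernel.map f (f ≫ g) (𝟙 X) g w₁ := by rw [Category.assoc]

end ThirdIso

/-- The shift-by-`e` functor on `ℕᵒᵖ`. -/
def shiftNat (e : ℕ) : ℕᵒᵖ ⥤ ℕᵒᵖ :=
  ((show Monotone fun k => e + k from fun _ _ h => Nat.add_le_add_left h e).functor).op

instance shiftNat_initial (e : ℕ) : (shiftNat e).Initial := by
  apply Functor.initial_of_exists_of_isCofiltered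
  · intro d
    exact ⟨d, ⟨(homOfLE (Nat.le_add_left d.unop e)).op⟩⟩
  · intro d c s s'
    refine ⟨c, 𝟙 c, ?_⟩
    congr 1
    apply Quiver.Hom.unop_inj
    apply Subsingleton.elim

/-- The comparison natural transformation `coker (F_{e+k} → F_e) ⟶ coker (F_{e+k} → F_0)`. -/
noncomputable def etaNat (V : ℕᵒᵖ ⥤ A) (e : ℕ) :
    relCokerDiagram V e ⟶ shiftNat e ⋙ cokerDiagram V where
  app k := cokernel.map _ _ (𝟙 _) (V.map (homOfLE (Nat.zero_le e)).op) (by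
    erw [Category.id_comp, ← V.map_comp]
    congr 1)
  naturality a b u := by
    dsimp only [relCokerDiagram, cokerDiagram, shiftNat, Functor.comp_obj, Functor.comp_map]
    ext
    simp
    erw [cokernel.π_desc, Category.id_comp]

theorem etaNat_mono (V : ℕᵒᵖ ⥤ A) (hV : IsFilteredObj V) (e : ℕ) (k : ℕᵒᵖ) :
    Mono ((etaNat V e).app k) := by
  have : Mono (V.map (homOfLE (Nat.zero_le e)).op) := hV _
  exact third_mono _ _ _ (by erw [Category.id_comp, ← V.map_comp]; congr 1)

theorem etaNat_fac (V : ℕᵒᵖ ⥤ A) (hV : IsFilteredObj V) (e : ℕ) (k : ℕᵒᵖ) {T : A}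
    (u : T ⟶ (shiftNat e ⋙ cokerDiagram V).obj k)
    (hu : u ≫ (shiftNat e ⋙ cokerDiagram V).map
      ((homOfLE (Nat.zero_le k.unop)).op : k ⟶ op 0) = 0) :
    ∃ l : T ⟶ (relCokerDiagram V e).obj k, l ≫ (etaNat V e).app k = u := by
  have : Mono (V.map (homOfLE (Nat.zero_le e)).op) := hV _
  have hex := third_exact
    (V.map ((homOfLE (Nat.le_add_right e k.unop)).op : op (e + k.unop) ⟶ op e))
    (V.map ((shiftNat e).map ((homOfLE (Nat.zero_le k.unop)).op : k ⟶ op 0)))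
    (V.map ((homOfLE (Nat.zero_le e)).op : op e ⟶ op 0))
    (V.map ((homOfLE (Nat.zero_le (e + k.unop))).op : op (e + k.unop) ⟶ op 0))
    (by congr 1)
    (by rw [Category.id_comp, ← V.map_comp]; congr 1)
    (by erw [Category.comp_id, ← V.map_comp]; congr 1)
  have hm : Mono (cokernel.map (V.map ((homOfLE (Nat.le_add_right e k.unop)).op : op (e + k.unop) ⟶ op e))
      (V.map ((homOfLE (Nat.zero_le (e + k.unop))).op : op (e + k.unop) ⟶ op 0)) (𝟙 _)
      (V.map ((homOfLE (Nat.zero_le e)).op : op e ⟶ op 0))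
      (by rw [Category.id_comp, ← V.map_comp]; congr 1)) := third_mono _ _ _ _
  obtain ⟨l, hl⟩ := hex.lift' u hu
  exact ⟨l, hl⟩

/-- For each `e`, there is a natural isomorphism
`lim_{a ≥ e} coker (F_a V → F_e V) ≅ F_e V̂ = ker (lim_a coker i_a → coker i_e)`. -/
theorem statement0 (V : ℕᵒᵖ ⥤ A) (hV : IsFilteredObj V) (e : ℕ) :
    Nonempty (limit (relCokerDiagram V e) ≅
      kernel (limit.π (cokerDiagram V) (op e))) := by
  have hmono : ∀ k, Mono ((etaNat V e).app k) := etaNat_mono V hV e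
  have happ0 : (etaNat V e).app (op (0 : ℕ)) = 0 := by
    have h1 : cokernel.π (V.map (homOfLE (Nat.le_add_right e (unop (op (0 : ℕ))))).op) ≫
        (etaNat V e).app (op (0 : ℕ)) = 0 := by
      dsimp only [etaNat]
      erw [cokernel.π_desc]
      exact cokernel.condition _
    exact @zero_of_epi_comp _ _ _ _ _ _ _ _ coequalizer.π_epi h1
  have hw : limMap (etaNat V e) ≫ limit.π (shiftNat e ⋙ cokerDiagram V) (op (0 : ℕ)) = 0 := by
    rw [limMap_π, happ0, comp_zero]
  have key : ∀ {T : A} (u : T ⟶ limit (shiftNat e ⋙ cokerDiagram V)),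
      u ≫ limit.π (shiftNat e ⋙ cokerDiagram V) (op (0 : ℕ)) = 0 →
      ∃ l : T ⟶ limit (relCokerDiagram V e), l ≫ limMap (etaNat V e) = u := by
    intro T u hu
    have comp : ∀ j : ℕᵒᵖ, ∃ lj : T ⟶ (relCokerDiagram V e).obj j,
        lj ≫ (etaNat V e).app j = u ≫ limit.π (shiftNat e ⋙ cokerDiagram V) j := fun j =>
      etaNat_fac V hV e j _ (by rw [Category.assoc, limit.w]; exact hu)
    choose lj hlj using comp
    have hnat : ∀ {j j' : ℕᵒᵖ} (f : j ⟶ j'), lj j ≫ (relCokerDiagram V e).map f = lj j' := by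
      intro j j' f
      have := hmono j'
      rw [← cancel_mono ((etaNat V e).app j'), Category.assoc, (etaNat V e).naturality f,
        ← Category.assoc, hlj j, Category.assoc, limit.w, hlj j']
    refine ⟨limit.lift _ ⟨T, { app := lj, naturality := ?_ }⟩, ?_⟩
    · intro j j' f
      dsimp
      rw [Category.id_comp]
      exact (hnat f).symm
    · apply limit.hom_ext
      intro j
      rw [Category.assoc, limMap_π, ← Category.assoc, limit.lift_π]
      exact hlj j
  have hmonoLim : Mono (limMap (etaNat V e)) := by
    constructor
    intro T a b hab
    apply limit.hom_ext
    intro j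
    have := hmono j
    rw [← cancel_mono ((etaNat V e).app j), Category.assoc, Category.assoc, ← limMap_π,
      ← Category.assoc, ← Category.assoc, hab]
  have hlim : IsLimit (KernelFork.ofι (limMap (etaNat V e)) hw) :=
    KernelFork.IsLimit.ofι (limMap (etaNat V e)) hw
      (fun {T} u hu => (key u hu).choose)
      (fun {T} u hu => (key u hu).choose_spec)
      (fun {T} u hu m hm => by
        rw [← cancel_mono (limMap (etaNat V e)), hm, (key u hu).choose_spec])
  have hpre : limit.π (cokerDiagram V) (op e) =
      limit.pre (cokerDiagram V) (shiftNat e) ≫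
        limit.π (shiftNat e ⋙ cokerDiagram V) (op (0 : ℕ)) := (limit.pre_π (cokerDiagram V) (shiftNat e) (op (0 : ℕ))).symm
  exact ⟨(hlim.conePointUniqueUpToIso (kernelIsKernel _)) ≪≫
    (kernelIsIsoComp (limit.pre (cokerDiagram V) (shiftNat e))
      (limit.π (shiftNat e ⋙ cokerDiagram V) (op (0 : ℕ)))).symm ≪≫
    (kernelIsoOfEq hpre).symm⟩
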